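/- Let P be a probability mass function on a finite set U and let δ > 0. If u^n ∈ U^n is δ-typical for P (i.e., the empirical distribution Q of u^n satisfies ‖Q - P‖₁ ≤ δ) and the support of the empirical distribution of u^n is contained in the support of P, then 2^{-n(H(P)+δ₁)} ≤ P^{⊗n}(u^n) ≤ 2^{-n(H(P)-δ₁)}, where δ₁ = δ · log(1 / min_{u ∈ supp P} P(u)). -/
import Mathlib


open Finset Real

theorem stmt_3 (U : Type) [Fintype U] [DecidableEq U]
    (P : U → ℝ) (hP0 : ∀ u, 0 ≤ P u) (hP1 : ∑ u, P u = 1)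
    (δ : ℝ) (hδ : 0 < δ)
    (c : ℝ) (hc : IsLeast {x : ℝ | ∃ u, P u ≠ 0 ∧ x = P u} c) (hc0 : 0 < c)
    (n : ℕ) (hn : 1 ≤ n) (un : Fin n → U)
    (Q : U → ℝ) (hQ : Q = fun u => ((univ.filter (fun t : Fin n => un t = u)).card : ℝ) / n)
    (htyp : ∑ u, |Q u - P u| ≤ δ)
    (hsupp : ∀ t, P (un t) ≠ 0) :
    (2 : ℝ) ^ (-(n : ℝ) * ((-∑ u, P u * logb 2 (P u)) + δ * logb 2 (1 / c)))
      ≤ ∏ t, P (un t) ∧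
    ∏ t, P (un t)
      ≤ (2 : ℝ) ^ (-(n : ℝ) * ((-∑ u, P u * logb 2 (P u)) - δ * logb 2 (1 / c))) := by
  have h2 : (1:ℝ) < 2 := one_lt_two
  have hPle1 : ∀ u, P u ≤ 1 := by
    intro u
    rw [← hP1]
    exact Finset.single_le_sum (fun i _ => hP0 i) (mem_univ u)
  have hcle : ∀ u, P u ≠ 0 → c ≤ P u := fun u hu => hc.2 ⟨u, hu, rfl⟩
  have hc1 : c ≤ 1 := by
    obtain ⟨u, hu, hcu⟩ := hc.1
    rw [hcu]; exact hPle1 u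
  set L := logb 2 (1/c) with hL
  have hL0 : 0 ≤ L := by
    apply Real.logb_nonneg h2
    rw [le_div_iff₀ hc0]; simpa
  have hnpos : (0:ℝ) < n := by exact_mod_cast Nat.lt_of_lt_of_le Nat.zero_lt_one hn
  have hPt : ∀ t, 0 < P (un t) := fun t => lt_of_le_of_ne (hP0 _) (Ne.symm (hsupp t))
  have hprodpos : 0 < ∏ t, P (un t) := Finset.prod_pos (fun t _ => hPt t)
  have hQ0 : ∀ u, P u = 0 → Q u = 0 := by
    intro u hu
    rw [hQ]
    simp only
    have he : (univ.filter (fun t : Fin n => un t = u)) = ∅ := by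
      apply Finset.filter_false_of_mem
      intro t _ h
      exact hsupp t (h ▸ hu)
    rw [he]
    simp
  -- key sum identity
  have hsum : ∑ t, logb 2 (P (un t)) = (n:ℝ) * ∑ u, Q u * logb 2 (P u) := by
    rw [Finset.mul_sum, ← Finset.sum_fiberwise' univ un (fun u => logb 2 (P u))]
    apply Finset.sum_congr rfl
    intro u _
    rw [Finset.sum_const, nsmul_eq_mul, hQ]
    field_simp
  -- key bound
  have hkey : |∑ u, (Q u - P u) * logb 2 (P u)| ≤ δ * L := by
    calc |∑ u, (Q u - P u) * logb 2 (P u)| ≤ ∑ u, |(Q u - P u) * logb 2 (P u)| :=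
          Finset.abs_sum_le_sum_abs _ _
    _ ≤ ∑ u, |Q u - P u| * L := by
        apply Finset.sum_le_sum
        intro u _
        rw [abs_mul]
        by_cases hu : P u = 0
        · rw [hQ0 u hu, hu]; simp
        · apply mul_le_mul_of_nonneg_left _ (abs_nonneg _)
          rw [abs_of_nonpos (Real.logb_nonpos h2 (hP0 u) (hPle1 u))]
          rw [hL, one_div, Real.logb_inv]
          exact neg_le_neg (Real.logb_le_logb_of_le h2 hc0 (hcle u hu))
    _ ≤ δ * L := by
        rw [← Finset.sum_mul]
        exact mul_le_mul_of_nonneg_right htyp hL0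
  have hsplit : ∑ u, Q u * logb 2 (P u)
      = (∑ u, (Q u - P u) * logb 2 (P u)) + ∑ u, P u * logb 2 (P u) := by
    rw [← Finset.sum_add_distrib]
    apply Finset.sum_congr rfl
    intros; ring
  obtain ⟨hlo, hhi⟩ := abs_le.mp hkey
  have hprod : ∏ t, P (un t) = (2:ℝ) ^ (∑ t, logb 2 (P (un t))) := by
    rw [Real.rpow_sum_of_pos two_pos]
    exact Finset.prod_congr rfl (fun t _ => (Real.rpow_logb two_pos (by norm_num) (hPt t)).symm)
  constructor
  · rw [hprod, Real.rpow_le_rpow_left_iff h2, hsum]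
    have : -((-∑ u, P u * logb 2 (P u)) + δ * L) ≤ ∑ u, Q u * logb 2 (P u) := by
      rw [hsplit]; linarith
    nlinarith [this, hnpos]
  · rw [hprod, Real.rpow_le_rpow_left_iff h2, hsum]
    have : ∑ u, Q u * logb 2 (P u) ≤ -((-∑ u, P u * logb 2 (P u)) - δ * L) := by
      rw [hsplit]; linarith
    nlinarith [this, hnpos]
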